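/- arXiv:1311.3999 — 2 statements merged into one kernel-verified Lean document; each statement's English description precedes it below -/
import Mathlib

section
/- Let (X, μ) be a finite measure space, η : X → X a bijection which together with its inverse is measurable, and J : X → [0, ∞) a measurable function such that ∫ g(η(x)) J(x) dμ(x) = ∫ g(x) dμ(x) for every bounded measurable g : X → ℝ. Suppose f ∈ L²(X, μ; ℂ) satisfies f(η(x)) √(J(x)) = f(x) for μ-almost every x. Then the finite measure ν defined by ν(A) = ∫_A |f|² dμ is invariant under η, i.e. η is measure-preserving from (X, ν) to (X, ν). -/
open MeasureTheory

/-- If `f ∈ L²` is an invariant function of the Perron–Frobenius operator,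
`f(η x) √(J x) = f(x)` a.e., then the finite measure `|f|² dμ` is invariant
under `η`. -/
theorem invariant_function_gives_invariant_measure {X : Type*} [MeasurableSpace X]
    (μ : Measure X) [IsFiniteMeasure μ] (η : X ≃ X) (hη : Measurable η)
    (hηinv : Measurable η.symm)
    (J : X → ℝ) (hJmeas : Measurable J) (hJnonneg : ∀ x, 0 ≤ J x)
    (hchange : ∀ g : X → ℝ, Measurable g → (∃ C : ℝ, ∀ x, |g x| ≤ C) →
      ∫ x, g (η x) * J x ∂μ = ∫ x, g x ∂μ)
    (f : X → ℂ) (hf : MemLp f 2 μ)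
    (hinv : ∀ᵐ x ∂μ, f (η x) * (Real.sqrt (J x) : ℂ) = f x) :
    MeasurePreserving η (μ.withDensity fun x => ENNReal.ofReal (‖f x‖ ^ 2))
      (μ.withDensity fun x => ENNReal.ofReal (‖f x‖ ^ 2)) := by
  rcases eq_or_ne μ 0 with hμ0 | hμ0
  · subst hμ0
    refine ⟨hη, ?_⟩
    simp
  set d : X → ENNReal := fun x => ENNReal.ofReal (‖f x‖ ^ 2) with hd
  have d_ae : AEMeasurable d μ :=
    ((hf.aestronglyMeasurable.norm.aemeasurable).pow_const 2).ennreal_ofReal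
  -- a.e. identity from the invariance of f
  have hae : ∀ᵐ x ∂μ, d (η x) * ENNReal.ofReal (J x) = d x := by
    filter_upwards [hinv] with x hx
    have h1 : ‖f x‖ ^ 2 = ‖f (η x)‖ ^ 2 * J x := by
      rw [← hx, norm_mul, mul_pow, Complex.norm_real,
        Real.norm_eq_abs, abs_of_nonneg (Real.sqrt_nonneg _),
        Real.sq_sqrt (hJnonneg x)]
    simp only [hd]
    rw [h1, ENNReal.ofReal_mul (by positivity)]
  -- integrability of J
  have hJint : Integrable J μ := by
    by_contra hJ
    have h1 := hchange (fun _ => (1 : ℝ)) measurable_const ⟨1, fun x => by norm_num⟩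
    simp only [one_mul] at h1
    rw [integral_undef hJ, integral_const, smul_eq_mul, mul_one] at h1
    have : μ Set.univ ≠ 0 := by simpa [Measure.measure_univ_eq_zero] using hμ0
    exact this (by
      have := (ENNReal.toReal_eq_zero_iff _).1 h1.symm
      rcases this with h | h
      · exact h
      · exact absurd h (measure_ne_top μ _))
  set κ : Measure X := μ.withDensity fun x => ENNReal.ofReal (J x) with hκ
  have hκfin : IsFiniteMeasure κ := by
    refine isFiniteMeasure_withDensity ?_
    exact hJint.lintegral_lt_top.ne
  -- the change of variables hypothesis in measure form
  have hmap : Measure.map η κ = μ := by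
    ext s hs
    rw [Measure.map_apply hη hs, hκ, withDensity_apply _ (hη hs)]
    have hg := hchange (s.indicator fun _ => (1 : ℝ))
      (measurable_const.indicator hs)
      ⟨1, fun x => by
        by_cases hx : x ∈ s <;> simp [Set.indicator, hx]⟩
    have hL : (fun x => s.indicator (fun _ => (1 : ℝ)) (η x) * J x)
        = (η ⁻¹' s).indicator J := by
      funext x
      by_cases hx : η x ∈ s <;>
        simp [Set.indicator, hx, Set.mem_preimage]
    rw [hL, integral_indicator (hη hs)] at hg
    have hR : ∫ x, s.indicator (fun _ => (1 : ℝ)) x ∂μ = (μ s).toReal := by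
      rw [integral_indicator hs]
      simp [Measure.real]
    rw [hR] at hg
    have hof : ENNReal.ofReal (∫ x in η ⁻¹' s, J x ∂μ)
        = ∫⁻ x in η ⁻¹' s, ENNReal.ofReal (J x) ∂μ :=
      ofReal_integral_eq_lintegral_ofReal hJint.restrict
        (ae_of_all _ hJnonneg)
    rw [← hof, hg, ENNReal.ofReal_toReal (measure_ne_top μ s)]
  -- now prove the measures agree
  refine ⟨hη, ?_⟩
  ext s hs
  have d_ae' : AEMeasurable (s.indicator d) μ := d_ae.indicator hs
  have hcomp : AEMeasurable (fun x => s.indicator d (η x)) κ := by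
    have : AEMeasurable (s.indicator d) (Measure.map η κ) := by rwa [hmap]
    exact this.comp_measurable hη
  calc Measure.map η (μ.withDensity d) s
      = (μ.withDensity d) (η ⁻¹' s) := Measure.map_apply hη hs
    _ = ∫⁻ x in η ⁻¹' s, d x ∂μ := withDensity_apply _ (hη hs)
    _ = ∫⁻ x, (η ⁻¹' s).indicator d x ∂μ := (lintegral_indicator (hη hs) d).symm
    _ = ∫⁻ x, ENNReal.ofReal (J x) * s.indicator d (η x) ∂μ := by
        refine lintegral_congr_ae ?_
        filter_upwards [hae] with x hx
        by_cases hxs : η x ∈ s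
        · simp only [Set.indicator, Set.mem_preimage, hxs, if_true]
          rw [← hx]; ring
        · simp [Set.indicator, Set.mem_preimage, hxs]
    _ = ∫⁻ x, s.indicator d (η x) ∂κ := by
        rw [hκ, lintegral_withDensity_eq_lintegral_mul₀'
          hJmeas.ennreal_ofReal.aemeasurable hcomp]
        rfl
    _ = ∫⁻ x, s.indicator d x ∂(Measure.map η κ) :=
        (lintegral_map' (by rwa [hmap]) hη.aemeasurable).symm
    _ = ∫⁻ x, s.indicator d x ∂μ := by rw [hmap]
    _ = (μ.withDensity d) s := by
        rw [lintegral_indicator hs, withDensity_apply _ hs]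
end

section
/- Let X be a separable metric space equipped with a finite Borel measure μ, let η : X → X be a Borel-measurable bijection with Borel-measurable inverse, and let J : X → [0, ∞) be measurable with ∫ g(η(x)) J(x) dμ(x) = ∫ g(x) dμ(x) for every bounded measurable g. Suppose there exists f ∈ L²(X, μ; ℂ), not μ-a.e. zero, with f(η(x)) √(J(x)) = f(x) for μ-almost every x. Then the set of recurrent points {x ∈ X : liminf_{k→∞} dist(η^k(x), x) = 0} has positive μ-measure. -/
open MeasureTheory Filter
open scoped ENNReal NNReal

lemma isup_min_nat (a : ℝ≥0∞) : ⨆ n : ℕ, min a (n : ℝ≥0∞) = a := by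
  refine le_antisymm (iSup_le fun n => min_le_left _ _) ?_
  rcases eq_or_ne a ⊤ with rfl | ha
  · calc (⊤ : ℝ≥0∞) = ⨆ n : ℕ, (n : ℝ≥0∞) := ENNReal.iSup_natCast.symm
      _ ≤ ⨆ n : ℕ, min ⊤ (n : ℝ≥0∞) := by simp
  · obtain ⟨n, hn⟩ := ENNReal.exists_nat_gt ha
    calc a = min a (n : ℝ≥0∞) := (min_eq_left hn.le).symm
      _ ≤ _ := le_iSup (fun n : ℕ => min a (n : ℝ≥0∞)) n

/-- The change-of-variables identity extends to `ℝ≥0∞`-valued functions,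
given that `J` is integrable. -/
lemma key_lintegral {X : Type*} [MeasurableSpace X] (μ : Measure X) [IsFiniteMeasure μ]
    (η : X ≃ X) (hη : Measurable η)
    (J : X → ℝ) (hJmeas : Measurable J) (hJnonneg : ∀ x, 0 ≤ J x)
    (hJint : Integrable J μ)
    (hchange : ∀ g : X → ℝ, Measurable g → (∃ C : ℝ, ∀ x, |g x| ≤ C) →
      ∫ x, g (η x) * J x ∂μ = ∫ x, g x ∂μ)
    (G : X → ℝ≥0∞) (hG : Measurable G) :
    ∫⁻ x, G (η x) * ENNReal.ofReal (J x) ∂μ = ∫⁻ x, G x ∂μ := by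
  set Gn : ℕ → X → ℝ≥0∞ := fun n x => min (G x) (n : ℝ≥0∞) with hGn
  have hGnmeas : ∀ n, Measurable (Gn n) := fun n => hG.min measurable_const
  have hGnlt : ∀ n x, Gn n x ≠ ⊤ := fun n x =>
    (lt_of_le_of_lt (min_le_right _ _) (ENNReal.natCast_lt_top n)).ne
  have step : ∀ n, ∫⁻ x, Gn n (η x) * ENNReal.ofReal (J x) ∂μ = ∫⁻ x, Gn n x ∂μ := by
    intro n
    set g : X → ℝ := fun x => (Gn n x).toReal with hg
    have hgmeas : Measurable g := (hGnmeas n).ennreal_toReal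
    have hgnonneg : ∀ x, 0 ≤ g x := fun x => ENNReal.toReal_nonneg
    have hgbd : ∀ x, |g x| ≤ n := by
      intro x
      rw [abs_of_nonneg (hgnonneg x)]
      have := ENNReal.toReal_mono (ENNReal.natCast_ne_top n) (min_le_right (G x) (n : ℝ≥0∞))
      simpa using this
    have hofg : ∀ x, ENNReal.ofReal (g x) = Gn n x := fun x =>
      ENNReal.ofReal_toReal (hGnlt n x)
    have hint2 : Integrable g μ := by
      refine ⟨hgmeas.aestronglyMeasurable, ?_⟩
      exact (hasFiniteIntegral_iff_norm _).2 <| lt_of_le_of_lt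
        (lintegral_mono fun x => ENNReal.ofReal_le_ofReal
          (by simpa [abs_of_nonneg (hgnonneg x)] using hgbd x))
        (by simp [lintegral_const, ENNReal.mul_lt_top, measure_lt_top])
    have hint1 : Integrable (fun x => g (η x) * J x) μ := by
      refine Integrable.mono' (hJint.const_mul (n : ℝ))
        ((hgmeas.comp hη).mul hJmeas).aestronglyMeasurable ?_
      refine Filter.Eventually.of_forall fun x => ?_
      rw [Real.norm_eq_abs, abs_mul, abs_of_nonneg (hJnonneg x)]
      exact mul_le_mul_of_nonneg_right (hgbd _) (hJnonneg x)
    have hB := hchange g hgmeas ⟨n, hgbd⟩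
    rw [integral_eq_lintegral_of_nonneg_ae (Filter.Eventually.of_forall fun x =>
          mul_nonneg (hgnonneg _) (hJnonneg x)) hint1.aestronglyMeasurable,
        integral_eq_lintegral_of_nonneg_ae (Filter.Eventually.of_forall hgnonneg)
          hint2.aestronglyMeasurable] at hB
    have hfin1 : ∫⁻ x, ENNReal.ofReal (g (η x) * J x) ∂μ ≠ ⊤ := hint1.lintegral_lt_top.ne
    have hfin2 : ∫⁻ x, ENNReal.ofReal (g x) ∂μ ≠ ⊤ := hint2.lintegral_lt_top.ne
    have heq := (ENNReal.toReal_eq_toReal_iff' hfin1 hfin2).1 hB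
    have h1 : ∀ x, ENNReal.ofReal (g (η x) * J x) = Gn n (η x) * ENNReal.ofReal (J x) := by
      intro x
      rw [ENNReal.ofReal_mul (hgnonneg _), hofg]
    simp_rw [h1, hofg] at heq
    exact heq
  have mono1 : Monotone fun n : ℕ => fun x => Gn n (η x) * ENNReal.ofReal (J x) := by
    intro m n hmn x
    exact mul_le_mul_left (min_le_min le_rfl (by exact_mod_cast hmn)) _
  have mono2 : Monotone fun n : ℕ => Gn n := by
    intro m n hmn x
    exact min_le_min le_rfl (by exact_mod_cast hmn)
  calc ∫⁻ x, G (η x) * ENNReal.ofReal (J x) ∂μ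
      = ∫⁻ x, ⨆ n : ℕ, Gn n (η x) * ENNReal.ofReal (J x) ∂μ := by
        congr 1; funext x
        rw [← ENNReal.iSup_mul, isup_min_nat]
    _ = ⨆ n : ℕ, ∫⁻ x, Gn n (η x) * ENNReal.ofReal (J x) ∂μ :=
        lintegral_iSup (fun n => ((hGnmeas n).comp hη).mul
          (ENNReal.measurable_ofReal.comp hJmeas)) mono1
    _ = ⨆ n : ℕ, ∫⁻ x, Gn n x ∂μ := by simp_rw [step]
    _ = ∫⁻ x, ⨆ n : ℕ, Gn n x ∂μ := (lintegral_iSup hGnmeas mono2).symm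
    _ = ∫⁻ x, G x ∂μ := by simp_rw [hGn, isup_min_nat]

/-- If the Perron–Frobenius operator of `η` on a finite Borel measure space over a
separable metric space has a nontrivial invariant `L²` function, then the set of
points recurrent under `η` has positive measure. -/
theorem invariant_function_gives_recurrence {X : Type*} [MetricSpace X]
    [TopologicalSpace.SeparableSpace X] [MeasurableSpace X] [BorelSpace X]
    (μ : Measure X) [IsFiniteMeasure μ] (η : X ≃ X) (hη : Measurable η)
    (hηinv : Measurable η.symm)
    (J : X → ℝ) (hJmeas : Measurable J) (hJnonneg : ∀ x, 0 ≤ J x)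
    (hchange : ∀ g : X → ℝ, Measurable g → (∃ C : ℝ, ∀ x, |g x| ≤ C) →
      ∫ x, g (η x) * J x ∂μ = ∫ x, g x ∂μ)
    (f : X → ℂ) (hf : MemLp f 2 μ) (hfne : ¬ f =ᵐ[μ] 0)
    (hinv : ∀ᵐ x ∂μ, f (η x) * (Real.sqrt (J x) : ℂ) = f x) :
    0 < μ {x : X | Filter.liminf (fun k : ℕ => dist ((⇑η)^[k] x) x) Filter.atTop = 0} := by
  classical
  haveI : SecondCountableTopology X := UniformSpace.secondCountable_of_separable X
  -- μ is not the zero measure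
  have hμu : μ Set.univ ≠ 0 := by
    intro h
    rw [Measure.measure_univ_eq_zero] at h
    subst h
    exact hfne (by simp [Filter.EventuallyEq, ae_zero])
  -- J is integrable
  have hJint : Integrable J μ := by
    by_contra h
    have h0 : ∫ x, J x ∂μ = 0 := integral_undef h
    have h1 := hchange (fun _ => (1 : ℝ)) measurable_const ⟨1, fun x => by simp⟩
    simp only [one_mul, integral_const, smul_eq_mul, mul_one] at h1
    rw [h0] at h1
    exact hμu (by simpa [Measure.real, ENNReal.toReal_eq_zero_iff, measure_ne_top μ Set.univ] using h1.symm)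
  -- a strongly measurable representative of f
  set F : X → ℂ := hf.1.mk f with hF
  have hFm : StronglyMeasurable F := hf.1.stronglyMeasurable_mk
  have hfF : f =ᵐ[μ] F := hf.1.ae_eq_mk
  -- the density
  set D : X → ℝ≥0∞ := fun x => ENNReal.ofReal (‖F x‖ ^ 2) with hD'
  have hDmeas : Measurable D :=
    ENNReal.measurable_ofReal.comp ((hFm.measurable.norm).pow_const 2)
  -- the exceptional null set
  set N : Set X := toMeasurable μ {x | f x ≠ F x} with hNdef
  have hNmeas : MeasurableSet N := measurableSet_toMeasurable μ _
  have hN0 : μ N = 0 := by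
    rw [measure_toMeasurable]
    exact hfF
  -- a.e. x, η x ∈ N → J x = 0
  have haeN : ∀ᵐ x ∂μ, η x ∈ N → J x = 0 := by
    have hkey := key_lintegral μ η hη J hJmeas hJnonneg hJint hchange
      (N.indicator (fun _ => (1 : ℝ≥0∞))) (measurable_const.indicator hNmeas)
    rw [lintegral_indicator_const hNmeas, one_mul, hN0] at hkey
    have := (lintegral_eq_zero_iff
      (((measurable_const.indicator hNmeas).comp hη).mul
        (ENNReal.measurable_ofReal.comp hJmeas))).1 hkey
    filter_upwards [this] with x hx hxN
    have : N.indicator (fun _ => (1 : ℝ≥0∞)) (η x) = 1 := Set.indicator_of_mem hxN _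
    simp only [Pi.mul_apply, Function.comp_apply, Pi.zero_apply, this, one_mul] at hx
    have hJ0 : ENNReal.ofReal (J x) = 0 := hx
    exact le_antisymm (ENNReal.ofReal_eq_zero.mp hJ0) (hJnonneg x)
  -- the key a.e. identity for the density
  have hNsub : {x | f x ≠ F x} ⊆ N := subset_toMeasurable μ _
  have hxnotN : ∀ᵐ x ∂μ, x ∉ N := by
    rw [ae_iff]
    simpa using hN0
  have hDae : ∀ᵐ x ∂μ, D x = D (η x) * ENNReal.ofReal (J x) := by
    filter_upwards [hinv, hxnotN, haeN] with x hx hxN hηxN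
    have hfx : f x = F x := by
      by_contra h
      exact hxN (hNsub h)
    by_cases hcase : η x ∈ N
    · -- then J x = 0 and f x = 0
      have hJ0 : J x = 0 := hηxN hcase
      have hfx0 : f x = 0 := by
        rw [← hx, hJ0, Real.sqrt_zero]
        simp
      rw [hD']
      simp [← hfx, hfx0, hJ0]
    · -- then f (η x) = F (η x)
      have hfηx : f (η x) = F (η x) := by
        by_contra h
        exact hcase (hNsub h)
      have hnorm : ‖F x‖ ^ 2 = ‖F (η x)‖ ^ 2 * J x := by
        rw [← hfx, ← hfηx, ← hx]
        rw [norm_mul, mul_pow, Complex.norm_real, Real.norm_eq_abs,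
          abs_of_nonneg (Real.sqrt_nonneg _), Real.sq_sqrt (hJnonneg x)]
      show ENNReal.ofReal (‖F x‖ ^ 2) = ENNReal.ofReal (‖F (η x)‖ ^ 2) * ENNReal.ofReal (J x)
      rw [hnorm, ENNReal.ofReal_mul (by positivity)]
  -- the measure ν
  set ν : Measure X := μ.withDensity D with hν
  have hνac : ν ≪ μ := withDensity_absolutelyContinuous μ D
  -- ν is a finite measure
  have hIf2 : Integrable (fun x => ‖F x‖ ^ 2) μ := by
    have h1 : Integrable (fun x => ‖f x‖ ^ ((2 : ℝ≥0∞).toReal)) μ :=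
      hf.integrable_norm_rpow two_ne_zero ENNReal.ofNat_ne_top
    have h2 : Integrable (fun x => ‖f x‖ ^ 2) μ := by
      refine h1.congr (Filter.Eventually.of_forall fun x => ?_)
      show ‖f x‖ ^ ((2 : ℝ≥0∞)).toReal = ‖f x‖ ^ 2
      rw [show ((2 : ℝ≥0∞)).toReal = ((2 : ℕ) : ℝ) by norm_num, Real.rpow_natCast]
    exact h2.congr (hfF.mono fun x hx => by simp only [hx])
  have hνuniv : ν Set.univ = ∫⁻ x, D x ∂μ := by
    rw [hν, withDensity_apply _ MeasurableSet.univ, Measure.restrict_univ]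
  haveI hνfin : IsFiniteMeasure ν := by
    constructor
    rw [hνuniv]
    exact hIf2.lintegral_lt_top
  -- ν is nonzero
  have hνne : ν ≠ 0 := by
    intro h0
    have : ∫⁻ x, D x ∂μ = 0 := by rw [← hνuniv, h0]; simp
    have hD0 : D =ᵐ[μ] 0 := (lintegral_eq_zero_iff hDmeas).1 this
    apply hfne
    filter_upwards [hD0, hfF] with x hx hfx
    have : ENNReal.ofReal (‖F x‖ ^ 2) = 0 := hx
    have hn : ‖F x‖ ^ 2 ≤ 0 := ENNReal.ofReal_eq_zero.mp this
    have : F x = 0 := by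
      have := le_antisymm hn (by positivity)
      simpa [pow_eq_zero_iff] using this
    simp [hfx, this]
  -- η preserves ν
  have hmp : MeasurePreserving (⇑η) ν ν := by
    refine ⟨hη, ?_⟩
    refine Measure.ext fun A hA => ?_
    rw [Measure.map_apply hη hA, hν, withDensity_apply _ (hA.preimage hη),
      withDensity_apply _ hA, ← lintegral_indicator (hA.preimage hη),
      ← lintegral_indicator hA]
    have hpt : ∀ᵐ x ∂μ, (η ⁻¹' A).indicator D x
        = (A.indicator D) (η x) * ENNReal.ofReal (J x) := by
      filter_upwards [hDae] with x hx
      by_cases hxA : η x ∈ A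
      · rw [Set.indicator_of_mem hxA, Set.indicator_of_mem (Set.mem_preimage.2 hxA), hx]
      · rw [Set.indicator_of_notMem hxA, Set.indicator_of_notMem
          (fun h => hxA (Set.mem_preimage.1 h)), zero_mul]
    rw [lintegral_congr_ae hpt]
    exact key_lintegral μ η hη J hJmeas hJnonneg hJint hchange
      (A.indicator D) (hDmeas.indicator hA)
  -- Poincaré recurrence
  have hrec := hmp.conservative.ae_frequently_mem_of_mem_nhds
  have hsub : ∀ᵐ x ∂ν, Filter.liminf (fun k : ℕ => dist ((⇑η)^[k] x) x) Filter.atTop = 0 := by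
    filter_upwards [hrec] with x hx
    have hbd : Filter.IsBoundedUnder (· ≥ ·) Filter.atTop
        (fun k : ℕ => dist ((⇑η)^[k] x) x) :=
      Filter.isBoundedUnder_of ⟨0, fun k => dist_nonneg⟩
    have hfreq : ∀ ε : ℝ, 0 < ε → ∃ᶠ n in Filter.atTop, dist ((⇑η)^[n] x) x ≤ ε := by
      intro ε hε
      have := hx (Metric.ball x ε) (Metric.ball_mem_nhds x hε)
      exact this.mono fun n hn => le_of_lt (Metric.mem_ball.1 hn)
    have hcob := Filter.IsCoboundedUnder.of_frequently_le (hfreq 1 one_pos)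
    refine le_antisymm ?_ (Filter.le_liminf_of_le hcob
      (Filter.Eventually.of_forall fun k => dist_nonneg))
    refine le_of_forall_pos_le_add fun ε hε => ?_
    rw [zero_add]
    exact Filter.liminf_le_of_frequently_le (hfreq ε hε) hbd
  -- conclusion
  rw [pos_iff_ne_zero]
  intro hR0
  have hνR0 : ν {x : X | Filter.liminf (fun k : ℕ => dist ((⇑η)^[k] x) x) Filter.atTop = 0} = 0 :=
    hνac hR0
  have hνRc : ν {x : X | ¬ Filter.liminf (fun k : ℕ => dist ((⇑η)^[k] x) x) Filter.atTop = 0} = 0 :=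
    ae_iff.mp hsub
  apply hνne
  rw [← Measure.measure_univ_eq_zero]
  have : (Set.univ : Set X) ⊆ {x : X | Filter.liminf (fun k : ℕ => dist ((⇑η)^[k] x) x) Filter.atTop = 0}
      ∪ {x : X | ¬ Filter.liminf (fun k : ℕ => dist ((⇑η)^[k] x) x) Filter.atTop = 0} := by
    intro x _
    by_cases h : Filter.liminf (fun k : ℕ => dist ((⇑η)^[k] x) x) Filter.atTop = 0
    · exact Or.inl h
    · exact Or.inr h
  refine le_antisymm ?_ zero_le
  calc ν Set.univ ≤ ν ({x : X | Filter.liminf (fun k : ℕ => dist ((⇑η)^[k] x) x) Filter.atTop = 0}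
        ∪ {x : X | ¬ Filter.liminf (fun k : ℕ => dist ((⇑η)^[k] x) x) Filter.atTop = 0}) :=
      measure_mono this
    _ ≤ _ + _ := measure_union_le _ _
    _ = 0 := by rw [hνR0, hνRc, add_zero]
end
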